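/- arXiv:2311.05254 — 3 statements merged into one kernel-verified Lean document; each statement's English description precedes it below -/
import Mathlib

section
/- If T₁(r) and T₂(r) are any two characteristic functions of the equation (*) (i.e., defined from any two solution bases of (*)), where all the coefficients A₀,…,A_{n−1} are entire, then T₁(r) = T₂(r) + O(1) as r → ∞. -/
open MeasureTheory Filter Metric

noncomputable section

/-- `log⁺ x = max (log x) 0`. -/
def logPlus (x : ℝ) : ℝ := max (Real.log x) 0

/-- The point `r·e^{iθ}` on the circle of radius `r`. -/
def circlePt (r θ : ℝ) : ℂ := (r : ℂ) * Complex.exp (θ * Complex.I)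

/-- Maximum modulus `M(r,g)`. -/
def maxMod (g : ℂ → ℂ) (r : ℝ) : ℝ := sSup ((fun z => ‖g z‖) '' sphere (0:ℂ) r)

/-- `L(r,a,f) = max_{|z|=r} log⁺ (1/|f z − a|)`. -/
def Lfin (f : ℂ → ℂ) (a : ℂ) (r : ℝ) : ℝ :=
  sSup ((fun z => logPlus (1 / ‖f z - a‖)) '' sphere (0:ℂ) r)

/-- `L(r,∞,f) = max_{|z|=r} log⁺ |f z|`. -/
def Linf (f : ℂ → ℂ) (r : ℝ) : ℝ :=
  sSup ((fun z => logPlus ‖f z‖) '' sphere (0:ℂ) r)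

/-- Nevanlinna proximity function `m(r,a,f)`. -/
def proximity (f : ℂ → ℂ) (a : ℂ) (r : ℝ) : ℝ :=
  (1 / (2 * Real.pi)) * ∫ θ in (0:ℝ)..(2 * Real.pi), logPlus (1 / ‖f (circlePt r θ) - a‖)

/-- Spherical derivative `f#`. -/
def sphDeriv (f : ℂ → ℂ) (z : ℂ) : ℝ := ‖deriv f z‖ / (1 + ‖f z‖ ^ 2)

/-- `A(r,f)`, the normalized spherical area of the image of `D(0,r)`. -/
def sphArea (f : ℂ → ℂ) (r : ℝ) : ℝ :=
  (1 / Real.pi) * ∫ z in ball (0:ℂ) r, sphDeriv f z ^ 2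

/-- Ahlfors–Shimizu characteristic `T₀(r,f)`. -/
def T0 (f : ℂ → ℂ) (r : ℝ) : ℝ := ∫ t in (0:ℝ)..r, sphArea f t / t

/-- The Nevanlinna characteristic `T(r,f)`; we use the Ahlfors–Shimizu characteristic,
which agrees with the classical Nevanlinna characteristic up to a bounded term. -/
def nevT (f : ℂ → ℂ) (r : ℝ) : ℝ := T0 f r

/-- Petrenko's magnitude of deviation `δ_P(a,f)`. -/
def deltaP (f : ℂ → ℂ) (a : ℂ) : ℝ := liminf (fun r => Lfin f a r / nevT f r) atTop

/-- Nevanlinna deficiency `δ_N(a,f)`. -/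
def deltaN (f : ℂ → ℂ) (a : ℂ) : ℝ := liminf (fun r => proximity f a r / nevT f r) atTop

/-- Eremenko deviation `δ_E(a,f)`. -/
def deltaE (f : ℂ → ℂ) (a : ℂ) : ℝ := liminf (fun r => Lfin f a r / sphArea f r) atTop

/-- Order of growth `ρ(f)` (as an extended real, via the characteristic). -/
def fnOrder (f : ℂ → ℂ) : EReal :=
  limsup (fun r => ((Real.log (nevT f r) / Real.log r : ℝ) : EReal)) atTop

/-- Logarithmic order `ρ_log(f)`. -/
def fnLogOrder (f : ℂ → ℂ) : EReal :=
  limsup (fun r => ((Real.log (nevT f r) / Real.log (Real.log r) : ℝ) : EReal)) atTop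

/-- Upper linear density of `E ⊆ [0,∞)`. -/
def upDens (E : Set ℝ) : ℝ :=
  limsup (fun r => (volume (E ∩ Set.Icc 0 r)).toReal / r) atTop

/-- Upper logarithmic density of `E ⊆ [1,∞)`. -/
def upLogDens (E : Set ℝ) : ℝ :=
  limsup (fun r => (∫ t in E ∩ Set.Icc 1 r, 1 / t) / Real.log r) atTop

/-- Finite linear (Lebesgue) measure. -/
def FiniteLinearMeasure (E : Set ℝ) : Prop := volume E < ⊤

/-- Finite logarithmic measure: `∫_E dt/t < ∞`. -/
def FiniteLogMeasure (E : Set ℝ) : Prop := ∫⁻ t in E, ENNReal.ofReal (1 / t) < ⊤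

/-- `g` is (the function of) a polynomial. -/
def IsPolyFn (g : ℂ → ℂ) : Prop := ∃ p : Polynomial ℂ, ∀ z, g z = p.eval z

/-- `g` is a rational function. -/
def IsRatFn (g : ℂ → ℂ) : Prop :=
  ∃ p q : Polynomial ℂ, q ≠ 0 ∧ ∀ z, q.eval z ≠ 0 → g z = p.eval z / q.eval z

/-- Transcendental entire function. -/
def TranscEntire (g : ℂ → ℂ) : Prop := Differentiable ℂ g ∧ ¬ IsPolyFn g

/-- Transcendental meromorphic function on ℂ. -/
def TranscMero (g : ℂ → ℂ) : Prop := MeromorphicOn g Set.univ ∧ ¬ IsRatFn g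

/-- Entire solution of `f⁽ⁿ⁾ + A_{n-1} f⁽ⁿ⁻¹⁾ + ⋯ + A₀ f = 0`. -/
def IsSolutionE (n : ℕ) (A : Fin n → ℂ → ℂ) (f : ℂ → ℂ) : Prop :=
  Differentiable ℂ f ∧
  ∀ z, iteratedDeriv n f z + ∑ j : Fin n, A j z * iteratedDeriv j f z = 0

/-- Meromorphic solution of the equation (the identity is required at every point where
all functions involved are analytic, which determines it as an identity of meromorphic
functions). -/
def IsSolutionM (n : ℕ) (A : Fin n → ℂ → ℂ) (f : ℂ → ℂ) : Prop :=
  MeromorphicOn f Set.univ ∧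
  ∀ z, AnalyticAt ℂ f z → (∀ j, AnalyticAt ℂ (A j) z) →
    iteratedDeriv n f z + ∑ j : Fin n, A j z * iteratedDeriv j f z = 0

/-- A solution base of the equation with entire coefficients. -/
def IsSolutionBase (n : ℕ) (A : Fin n → ℂ → ℂ) (F : Fin n → ℂ → ℂ) : Prop :=
  (∀ k, IsSolutionE n A (F k)) ∧ LinearIndependent ℂ F ∧
  ∀ g, IsSolutionE n A g → ∃ c : Fin n → ℂ, g = fun z => ∑ k : Fin n, c k * F k z

/-- The characteristic function `T(r)` of the equation attached to a solution base. -/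
def charFn (n : ℕ) (F : Fin n → ℂ → ℂ) (r : ℝ) : ℝ :=
  (1 / (2 * Real.pi)) * ∫ θ in (0:ℝ)..(2 * Real.pi),
    Real.log (Real.sqrt (1 + ∑ k : Fin n, ‖F k (circlePt r θ)‖ ^ 2))

/-- Multiplicity of `z` as a zero of `g` (smallest `k` with `g⁽ᵏ⁾(z) ≠ 0`). -/
def zeroMult (g : ℂ → ℂ) (z : ℂ) : ℕ := sInf {k : ℕ | iteratedDeriv k g z ≠ 0}

/-- Number of zeros of `g` in `|z| ≤ r`, counted with multiplicity. -/
def zeroCount (g : ℂ → ℂ) (r : ℝ) : ℕ := ∑ᶠ z ∈ closedBall (0:ℂ) r, zeroMult g z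

end

section Aux

private lemma aux_log_bound {a b K : ℝ} (ha : 1 ≤ a) (hb : 1 ≤ b) (hK : 1 ≤ K)
    (h1 : a ≤ K * b) (h2 : b ≤ K * a) :
    |Real.log (Real.sqrt a) - Real.log (Real.sqrt b)| ≤ Real.log K / 2 := by
  have ha0 : (0:ℝ) < a := by linarith
  have hb0 : (0:ℝ) < b := by linarith
  have hK0 : (0:ℝ) < K := by linarith
  rw [Real.log_sqrt ha0.le, Real.log_sqrt hb0.le]
  have hla : Real.log a ≤ Real.log K + Real.log b := by
    rw [← Real.log_mul hK0.ne' hb0.ne']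
    exact Real.log_le_log ha0 h1
  have hlb : Real.log b ≤ Real.log K + Real.log a := by
    rw [← Real.log_mul hK0.ne' ha0.ne']
    exact Real.log_le_log hb0 h2
  rw [abs_le]
  constructor <;> linarith

private lemma aux_sum_sq_le {n : ℕ} (c : Fin n → Fin n → ℂ) (F G : Fin n → ℂ → ℂ)
    (hc : ∀ k, G k = fun z => ∑ j : Fin n, c k j * F j z) (z : ℂ) :
    ∑ k : Fin n, ‖G k z‖ ^ 2 ≤
      (∑ k : Fin n, ∑ j : Fin n, ‖c k j‖ ^ 2) * ∑ j : Fin n, ‖F j z‖ ^ 2 := by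
  rw [Finset.sum_mul]
  apply Finset.sum_le_sum
  intro k _
  have h1 : ‖G k z‖ ≤ ∑ j : Fin n, ‖c k j‖ * ‖F j z‖ := by
    rw [hc k]
    refine (norm_sum_le _ _).trans ?_
    apply Finset.sum_le_sum
    intro j _
    rw [norm_mul]
  calc ‖G k z‖ ^ 2 ≤ (∑ j : Fin n, ‖c k j‖ * ‖F j z‖) ^ 2 := by
        apply pow_le_pow_left₀ (norm_nonneg _) h1
    _ ≤ (∑ j : Fin n, ‖c k j‖ ^ 2) * ∑ j : Fin n, ‖F j z‖ ^ 2 :=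
        Finset.sum_mul_sq_le_sq_mul_sq _ _ _

end Aux

/-- Any two characteristic functions of the equation (defined from any two
solution bases) agree up to `O(1)` as `r → ∞`. -/
theorem two_characteristic_functions_differ_by_O1
    {n : ℕ} (A : Fin n → ℂ → ℂ) (hA : ∀ j, Differentiable ℂ (A j))
    (F₁ F₂ : Fin n → ℂ → ℂ)
    (h₁ : IsSolutionBase n A F₁) (h₂ : IsSolutionBase n A F₂) :
    ∃ C : ℝ, ∀ᶠ r in Filter.atTop, |charFn n F₁ r - charFn n F₂ r| ≤ C := by
  obtain ⟨hsol₁, -, hspan₁⟩ := h₁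
  obtain ⟨hsol₂, -, hspan₂⟩ := h₂
  choose c hc using fun k => hspan₁ (F₂ k) (hsol₂ k)
  choose d hd using fun k => hspan₂ (F₁ k) (hsol₁ k)
  set C₁ : ℝ := ∑ k : Fin n, ∑ j : Fin n, ‖c k j‖ ^ 2 with hC₁def
  set C₂ : ℝ := ∑ k : Fin n, ∑ j : Fin n, ‖d k j‖ ^ 2 with hC₂def
  have hC₁0 : 0 ≤ C₁ := Finset.sum_nonneg fun _ _ => Finset.sum_nonneg fun _ _ => sq_nonneg _
  have hC₂0 : 0 ≤ C₂ := Finset.sum_nonneg fun _ _ => Finset.sum_nonneg fun _ _ => sq_nonneg _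
  set K : ℝ := max (1 + C₁) (1 + C₂) with hKdef
  have hK1 : 1 ≤ K := le_trans (by linarith) (le_max_left _ _)
  -- pointwise sum bounds
  have hS : ∀ i : Fin 2, ∀ z : ℂ, 0 ≤ ∑ k : Fin n, ‖(if i = 0 then F₁ else F₂) k z‖ ^ 2 :=
    fun i z => Finset.sum_nonneg fun _ _ => sq_nonneg _
  have key₂ : ∀ z, 1 + ∑ k : Fin n, ‖F₂ k z‖ ^ 2 ≤ K * (1 + ∑ k : Fin n, ‖F₁ k z‖ ^ 2) := by
    intro z
    have h := aux_sum_sq_le c F₁ F₂ hc z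
    have hs1 : 0 ≤ ∑ k : Fin n, ‖F₁ k z‖ ^ 2 :=
      Finset.sum_nonneg fun _ _ => sq_nonneg _
    have hm : 1 + C₁ ≤ K := le_max_left _ _
    nlinarith [mul_le_mul_of_nonneg_right hm (by linarith : (0:ℝ) ≤ 1 + ∑ k : Fin n, ‖F₁ k z‖ ^ 2)]
  have key₁ : ∀ z, 1 + ∑ k : Fin n, ‖F₁ k z‖ ^ 2 ≤ K * (1 + ∑ k : Fin n, ‖F₂ k z‖ ^ 2) := by
    intro z
    have h := aux_sum_sq_le d F₂ F₁ hd z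
    have hs2 : 0 ≤ ∑ k : Fin n, ‖F₂ k z‖ ^ 2 :=
      Finset.sum_nonneg fun _ _ => sq_nonneg _
    have hm : 1 + C₂ ≤ K := le_max_right _ _
    nlinarith [mul_le_mul_of_nonneg_right hm (by linarith : (0:ℝ) ≤ 1 + ∑ k : Fin n, ‖F₂ k z‖ ^ 2)]
  refine ⟨Real.log K / 2, Filter.Eventually.of_forall fun r => ?_⟩
  -- integrand continuity
  have hcp : Continuous (circlePt r) := by
    unfold circlePt
    exact continuous_const.mul (Complex.continuous_exp.comp
      ((Complex.continuous_ofReal.mul continuous_const)))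
  have hcont : ∀ (F : Fin n → ℂ → ℂ), (∀ k, Differentiable ℂ (F k)) →
      Continuous fun θ : ℝ =>
        Real.log (Real.sqrt (1 + ∑ k : Fin n, ‖F k (circlePt r θ)‖ ^ 2)) := by
    intro F hF
    have hsum : Continuous fun θ : ℝ => 1 + ∑ k : Fin n, ‖F k (circlePt r θ)‖ ^ 2 :=
      continuous_const.add (continuous_finset_sum _ fun k _ =>
        (((hF k).continuous.comp hcp).norm.pow 2))
    have hge : ∀ θ : ℝ, (1:ℝ) ≤ 1 + ∑ k : Fin n, ‖F k (circlePt r θ)‖ ^ 2 := by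
      intro θ
      have : 0 ≤ ∑ k : Fin n, ‖F k (circlePt r θ)‖ ^ 2 :=
        Finset.sum_nonneg fun _ _ => sq_nonneg _
      linarith
    apply Continuous.log ((Real.continuous_sqrt).comp hsum)
    intro θ
    have h0 : (0:ℝ) < Real.sqrt (1 + ∑ k : Fin n, ‖F k (circlePt r θ)‖ ^ 2) :=
      Real.sqrt_pos.mpr (by linarith [hge θ])
    exact ne_of_gt h0
  have hcont₁ := hcont F₁ fun k => (hsol₁ k).1
  have hcont₂ := hcont F₂ fun k => (hsol₂ k).1
  have hint₁ := hcont₁.intervalIntegrable (μ := volume) (0:ℝ) (2 * Real.pi)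
  have hint₂ := hcont₂.intervalIntegrable (μ := volume) (0:ℝ) (2 * Real.pi)
  have hπ : (0:ℝ) < 2 * Real.pi := by positivity
  have hdiff : charFn n F₁ r - charFn n F₂ r =
      (1 / (2 * Real.pi)) * ∫ θ in (0:ℝ)..(2 * Real.pi),
        (Real.log (Real.sqrt (1 + ∑ k : Fin n, ‖F₁ k (circlePt r θ)‖ ^ 2)) -
         Real.log (Real.sqrt (1 + ∑ k : Fin n, ‖F₂ k (circlePt r θ)‖ ^ 2))) := by
    rw [intervalIntegral.integral_sub hint₁ hint₂]
    unfold charFn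
    ring
  rw [hdiff, abs_mul, abs_of_pos (by positivity : (0:ℝ) < 1 / (2 * Real.pi))]
  have hbound : ‖∫ θ in (0:ℝ)..(2 * Real.pi),
      (Real.log (Real.sqrt (1 + ∑ k : Fin n, ‖F₁ k (circlePt r θ)‖ ^ 2)) -
       Real.log (Real.sqrt (1 + ∑ k : Fin n, ‖F₂ k (circlePt r θ)‖ ^ 2)))‖ ≤
      Real.log K / 2 * |2 * Real.pi - 0| := by
    apply intervalIntegral.norm_integral_le_of_norm_le_const
    intro θ _
    rw [Real.norm_eq_abs]
    have hs1 : 0 ≤ ∑ k : Fin n, ‖F₁ k (circlePt r θ)‖ ^ 2 :=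
      Finset.sum_nonneg fun _ _ => sq_nonneg _
    have hs2 : 0 ≤ ∑ k : Fin n, ‖F₂ k (circlePt r θ)‖ ^ 2 :=
      Finset.sum_nonneg fun _ _ => sq_nonneg _
    exact aux_log_bound (by linarith) (by linarith) hK1 (key₁ _) (key₂ _)
  rw [Real.norm_eq_abs] at hbound
  calc 1 / (2 * Real.pi) * |∫ θ in (0:ℝ)..(2 * Real.pi),
        (Real.log (Real.sqrt (1 + ∑ k : Fin n, ‖F₁ k (circlePt r θ)‖ ^ 2)) -
         Real.log (Real.sqrt (1 + ∑ k : Fin n, ‖F₂ k (circlePt r θ)‖ ^ 2)))|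
      ≤ 1 / (2 * Real.pi) * (Real.log K / 2 * |2 * Real.pi - 0|) := by
        exact mul_le_mul_of_nonneg_left hbound (by positivity)
    _ = Real.log K / 2 := by
        rw [sub_zero, abs_of_pos hπ]
        field_simp
end

section
/- If f is a transcendental meromorphic function on ℂ with ρ_log(f) > α > 2, then the set H₂ = {r ≥ 1 : A(r,f) ≥ log^{α−1} r} satisfies logdens̄(H₂) = 1. -/
open MeasureTheory Filter Metric

section AuxProofs

open MeasureTheory Filter Metric

/-- If `nevT f` is eventually constant, the logarithmic order is `0`. -/
private lemma aux_const_T (f : ℂ → ℂ) (t₁ : ℝ) (hc : ∀ r ≥ t₁, nevT f r = nevT f t₁) :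
    fnLogOrder f ≤ 0 := by
  have htend : Tendsto (fun r : ℝ => Real.log (nevT f r) / Real.log (Real.log r))
      atTop (nhds 0) := by
    have h1 : Tendsto (fun r : ℝ => Real.log (nevT f t₁) / Real.log (Real.log r))
        atTop (nhds 0) :=
      Filter.Tendsto.div_atTop tendsto_const_nhds
        (Real.tendsto_log_atTop.comp Real.tendsto_log_atTop)
    refine Tendsto.congr' ?_ h1
    filter_upwards [eventually_ge_atTop t₁] with r hr
    rw [hc r hr]
  have h2 : Tendsto (fun r : ℝ =>
      ((Real.log (nevT f r) / Real.log (Real.log r) : ℝ) : EReal)) atTop (nhds (0 : EReal)) :=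
    EReal.tendsto_coe.2 htend
  rw [fnLogOrder]
  exact le_of_eq h2.limsup_eq

end AuxProofs

/-- Lemma 3.1(b): for transcendental meromorphic `f` with `ρ_log(f) > α > 2`,
the set `H₂ = {r ≥ 1 : A(r,f) ≥ log^{α−1} r}` has upper logarithmic density `1`. -/
theorem sphArea_logdensity_one
    (f : ℂ → ℂ) (hf : TranscMero f) (α : ℝ) (hα : 2 < α)
    (h : (α : EReal) < fnLogOrder f) :
    upLogDens {r : ℝ | 1 ≤ r ∧ Real.log r ^ (α - 1) ≤ sphArea f r} = 1 := by
  classical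
  set E : Set ℝ := {r : ℝ | 1 ≤ r ∧ Real.log r ^ (α - 1) ≤ sphArea f r} with hE
  -- Step 0: rule out the degenerate case that `nevT f` is eventually constant.
  have hnotconst : ¬ ∃ t₁ : ℝ, ∀ r ≥ t₁, nevT f r = nevT f t₁ := by
    rintro ⟨t₁, hc⟩
    have hle : fnLogOrder f ≤ 0 := aux_const_T f t₁ hc
    have h0 : (α : EReal) < ((0 : ℝ) : EReal) := by
      rw [EReal.coe_zero]; exact lt_of_lt_of_le h hle
    have : α < 0 := by exact_mod_cast h0
    linarith
  -- Step 1: integrability of the spherical derivative on all balls.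
  have hInt : ∀ t : ℝ, IntegrableOn (fun z => sphDeriv f z ^ 2) (ball (0:ℂ) t) volume := by
    by_contra hcon
    push_neg at hcon
    obtain ⟨t₀, ht₀⟩ := hcon
    set t₁ := max t₀ 1 with ht₁def
    have hA0 : ∀ t ≥ t₁, sphArea f t = 0 := by
      intro t ht
      have hni : ¬ IntegrableOn (fun z => sphDeriv f z ^ 2) (ball (0:ℂ) t) volume := by
        intro hi
        exact ht₀ (hi.mono_set (ball_subset_ball ((le_max_left _ _).trans ht)))
      rw [sphArea, integral_undef hni, mul_zero]
    refine hnotconst ⟨t₁, ?_⟩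
    intro r hr
    by_cases hII₁ : IntervalIntegrable (fun t => sphArea f t / t) volume 0 t₁
    · have hz : Set.EqOn (fun t => sphArea f t / t) 0 (Set.uIcc t₁ r) := by
        intro t ht
        rw [Set.uIcc_of_le hr] at ht
        simp [hA0 t ht.1]
      have hII₂ : IntervalIntegrable (fun t => sphArea f t / t) volume t₁ r := by
        have h0' : IntegrableOn (fun t => sphArea f t / t) (Set.uIcc t₁ r) volume :=
          (integrableOn_zero).congr_fun (fun t ht => (hz ht).symm) measurableSet_uIcc
        exact h0'.intervalIntegrable
      have hsplit := intervalIntegral.integral_add_adjacent_intervals hII₁ hII₂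
      have h00 : ∫ t in t₁..r, sphArea f t / t = 0 := by
        rw [intervalIntegral.integral_congr hz]; simp
      show T0 f r = T0 f t₁
      rw [T0, T0, ← hsplit, h00, add_zero]
    · have hsub : Set.uIcc 0 t₁ ⊆ Set.uIcc 0 r := by
        rw [Set.uIcc_of_le (le_trans (by positivity) hr),
          Set.uIcc_of_le (le_trans zero_le_one (le_max_right t₀ 1))]
        exact Set.Icc_subset_Icc le_rfl hr
      have h1 : ¬ IntervalIntegrable (fun t => sphArea f t / t) volume 0 r :=
        fun hi => hII₁ (hi.mono_set hsub)
      show T0 f r = T0 f t₁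
      rw [T0, T0, intervalIntegral.integral_undef h1, intervalIntegral.integral_undef hII₁]
  -- Step 2: interval integrability of `A(t)/t` on `[0, r]` for all `r ≥ 0`.
  have hIIall : ∀ r : ℝ, 0 ≤ r → IntervalIntegrable (fun t => sphArea f t / t) volume 0 r := by
    by_contra hcon
    push_neg at hcon
    obtain ⟨r₀, hr₀, hni⟩ := hcon
    set t₁ := max r₀ 1 with ht₁def
    have key : ∀ r ≥ t₁, ¬ IntervalIntegrable (fun t => sphArea f t / t) volume 0 r := by
      intro r hr hi
      refine hni (hi.mono_set ?_)
      rw [Set.uIcc_of_le hr₀, Set.uIcc_of_le (le_trans zero_le_one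
        (le_trans (le_max_right r₀ 1) hr))]
      exact Set.Icc_subset_Icc le_rfl ((le_max_left r₀ 1).trans hr)
    refine hnotconst ⟨t₁, ?_⟩
    intro r hr
    show T0 f r = T0 f t₁
    rw [T0, T0, intervalIntegral.integral_undef (key r hr),
      intervalIntegral.integral_undef (key t₁ le_rfl)]
  -- Step 3: basic properties of `A = sphArea f` and `T = T0 f`.
  have hA_nonneg : ∀ t : ℝ, 0 ≤ sphArea f t := by
    intro t
    rw [sphArea]
    refine mul_nonneg (by positivity) ?_
    exact setIntegral_nonneg measurableSet_ball (fun z _ => sq_nonneg _)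
  have hA_mono : Monotone (sphArea f) := by
    intro s t hst
    rw [sphArea, sphArea]
    refine mul_le_mul_of_nonneg_left ?_ (by positivity)
    refine setIntegral_mono_set (hInt t) ?_ ?_
    · exact Filter.Eventually.of_forall (fun z => sq_nonneg _)
    · exact (ball_subset_ball hst).eventuallyLE
  have hT_nonneg : ∀ r : ℝ, 0 ≤ r → 0 ≤ T0 f r := by
    intro r hr
    rw [T0]
    refine intervalIntegral.integral_nonneg hr ?_
    intro u hu
    exact div_nonneg (hA_nonneg u) hu.1
  set c := T0 f 1 with hcdef
  -- Step 4: the key inequality `T(r) ≤ T(1) + A(r) log r`.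
  have hkey : ∀ r : ℝ, 1 ≤ r → T0 f r ≤ c + sphArea f r * Real.log r := by
    intro r hr
    have hr0 : (0:ℝ) ≤ r := by linarith
    have hII1 : IntervalIntegrable (fun t => sphArea f t / t) volume 0 1 := hIIall 1 zero_le_one
    have hIIr : IntervalIntegrable (fun t => sphArea f t / t) volume 0 r := hIIall r hr0
    have hII1r : IntervalIntegrable (fun t => sphArea f t / t) volume 1 r := by
      refine hIIr.mono_set ?_
      rw [Set.uIcc_of_le hr, Set.uIcc_of_le hr0]
      exact Set.Icc_subset_Icc (by norm_num) le_rfl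
    have hsplit := intervalIntegral.integral_add_adjacent_intervals hII1 hII1r
    have hIIg : IntervalIntegrable (fun t => sphArea f r / t) volume 1 r := by
      refine ContinuousOn.intervalIntegrable ?_
      refine ContinuousOn.div continuousOn_const continuousOn_id ?_
      intro t ht
      rw [Set.uIcc_of_le hr] at ht
      exact ne_of_gt (lt_of_lt_of_le zero_lt_one ht.1)
    have hmono : ∫ t in (1:ℝ)..r, sphArea f t / t ≤ ∫ t in (1:ℝ)..r, sphArea f r / t := by
      refine intervalIntegral.integral_mono_on hr hII1r hIIg ?_
      intro t ht
      have ht0 : 0 < t := lt_of_lt_of_le zero_lt_one ht.1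
      exact div_le_div_of_nonneg_right (hA_mono ht.2) ht0.le
    have hval : ∫ t in (1:ℝ)..r, sphArea f r / t = sphArea f r * Real.log r := by
      have hrw : (fun t : ℝ => sphArea f r / t) = fun t : ℝ => sphArea f r * (1 / t) := by
        funext t; ring
      rw [hrw, intervalIntegral.integral_const_mul, integral_one_div ?_, div_one]
      rw [Set.uIcc_of_le hr]
      rintro ⟨h1, -⟩
      norm_num at h1
    calc T0 f r = c + ∫ t in (1:ℝ)..r, sphArea f t / t := by
          rw [hcdef, T0, T0, ← hsplit]
      _ ≤ c + sphArea f r * Real.log r := by rw [← hval]; linarith [hmono]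
  -- Step 5: extract a real `β > α` with `T(r) > (log r)^β` frequently.
  obtain ⟨b, hαb, hbl⟩ := exists_between h
  have hbne : b ≠ ⊤ := (lt_of_lt_of_le hbl le_top).ne
  have hbne' : b ≠ ⊥ := ne_bot_of_gt hαb
  lift b to ℝ using ⟨hbne, hbne'⟩ with β
  have hβα : α < β := by exact_mod_cast hαb
  have hfreq : ∃ᶠ r in atTop, β < Real.log (T0 f r) / Real.log (Real.log r) := by
    by_contra hcon
    rw [not_frequently] at hcon
    have hle : fnLogOrder f ≤ (β : EReal) := by
      refine Filter.limsup_le_of_le (by isBoundedDefault) ?_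
      filter_upwards [hcon] with r hr
      rw [not_lt] at hr
      exact_mod_cast hr
    exact absurd hle hbl.not_ge
  -- Step 6: the eventual inequality on `r` needed for the main argument.
  have hEv : ∀ K : ℝ, 1 < K → ∀ᶠ r in atTop,
      1 < Real.log r ∧ c + K ^ (α - 1) * Real.log r ^ α ≤ Real.log r ^ β := by
    intro K hK
    have h1 : ∀ᶠ r : ℝ in atTop, 1 < Real.log r :=
      Real.tendsto_log_atTop.eventually_gt_atTop 1
    have h2 : ∀ᶠ r : ℝ in atTop, K ^ (α - 1) + |c| ≤ Real.log r ^ (β - α) :=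
      ((tendsto_rpow_atTop (by linarith : (0:ℝ) < β - α)).comp
        Real.tendsto_log_atTop).eventually_ge_atTop _
    filter_upwards [h1, h2] with r hr1 hr2
    refine ⟨hr1, ?_⟩
    have hlr : (0:ℝ) < Real.log r := by linarith
    have e2 : (1:ℝ) ≤ Real.log r ^ α := Real.one_le_rpow hr1.le (by linarith)
    have e3 : c ≤ |c| * Real.log r ^ α :=
      (le_abs_self c).trans (le_mul_of_one_le_right (abs_nonneg c) e2)
    have e4 : (K ^ (α - 1) + |c|) * Real.log r ^ α ≤
        Real.log r ^ (β - α) * Real.log r ^ α :=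
      mul_le_mul_of_nonneg_right hr2 (by positivity)
    have e5 : Real.log r ^ (β - α) * Real.log r ^ α = Real.log r ^ β := by
      rw [← Real.rpow_add hlr, sub_add_cancel]
    nlinarith [e3, e4, e5]
  -- Step 7: main frequency claim.
  have hφ0 : ∀ R : ℝ, 0 ≤ (∫ t in E ∩ Set.Icc 1 R, 1 / t) / Real.log R := by
    intro R
    rcases le_or_gt R 1 with hR | hR
    · rcases lt_or_eq_of_le hR with hR' | hR'
      · rw [Set.Icc_eq_empty (not_le.2 hR'), Set.inter_empty, Measure.restrict_empty,
          integral_zero_measure, zero_div]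
      · have : (∫ t in E ∩ Set.Icc 1 R, (1:ℝ) / t) / Real.log R
            = (∫ t in E ∩ Set.Icc 1 R, (1:ℝ) / t) / 0 := by rw [hR', Real.log_one]
        rw [this, div_zero]
    · have hnum : 0 ≤ ∫ t in E ∩ Set.Icc 1 R, (1:ℝ) / t := by
        refine integral_nonneg_of_ae ?_
        refine ae_restrict_of_ae_restrict_of_subset Set.inter_subset_right ?_
        refine (ae_restrict_iff' measurableSet_Icc).2 (Filter.Eventually.of_forall ?_)
        intro t ht
        exact div_nonneg zero_le_one (by linarith [ht.1])
      exact div_nonneg hnum (Real.log_nonneg hR.le)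
  have hφ1 : ∀ R : ℝ, (∫ t in E ∩ Set.Icc 1 R, 1 / t) / Real.log R ≤ 1 := by
    intro R
    rcases le_or_gt R 1 with hR | hR
    · rcases lt_or_eq_of_le hR with hR' | hR'
      · rw [Set.Icc_eq_empty (not_le.2 hR'), Set.inter_empty, Measure.restrict_empty,
          integral_zero_measure, zero_div]
        norm_num
      · have : (∫ t in E ∩ Set.Icc 1 R, (1:ℝ) / t) / Real.log R
            = (∫ t in E ∩ Set.Icc 1 R, (1:ℝ) / t) / 0 := by rw [hR', Real.log_one]
        rw [this, div_zero]
        norm_num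
    · have hRlog : 0 < Real.log R := Real.log_pos hR
      have hint : IntegrableOn (fun t : ℝ => 1 / t) (Set.Icc 1 R) volume := by
        refine ContinuousOn.integrableOn_Icc ?_
        refine ContinuousOn.div continuousOn_const continuousOn_id ?_
        intro t ht
        exact ne_of_gt (lt_of_lt_of_le zero_lt_one ht.1)
      have hsign : 0 ≤ᵐ[volume.restrict (Set.Icc (1:ℝ) R)] fun t : ℝ => 1 / t := by
        refine (ae_restrict_iff' measurableSet_Icc).2 (Filter.Eventually.of_forall ?_)
        intro t ht
        exact div_nonneg zero_le_one (by linarith [ht.1])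
      have hmono2 : (∫ t in E ∩ Set.Icc 1 R, (1:ℝ) / t) ≤ ∫ t in Set.Icc (1:ℝ) R, (1:ℝ) / t :=
        setIntegral_mono_set hint hsign (Set.inter_subset_right.eventuallyLE)
      have hIccval : ∫ t in Set.Icc (1:ℝ) R, (1:ℝ) / t = Real.log R := by
        rw [integral_Icc_eq_integral_Ioc, ← intervalIntegral.integral_of_le hR.le,
          integral_one_div, Real.log_div (by linarith) one_ne_zero, Real.log_one, sub_zero]
        rw [Set.uIcc_of_le hR.le]
        rintro ⟨h1, -⟩
        norm_num at h1
      rw [div_le_one hRlog]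
      calc (∫ t in E ∩ Set.Icc 1 R, (1:ℝ) / t) ≤ ∫ t in Set.Icc (1:ℝ) R, (1:ℝ) / t := hmono2
        _ = Real.log R := hIccval
  have hmain : ∀ K : ℝ, 1 < K →
      ∃ᶠ R in atTop, 1 - 1 / K ≤ (∫ t in E ∩ Set.Icc 1 R, 1 / t) / Real.log R := by
    intro K hK
    rw [Filter.frequently_atTop]
    intro M
    obtain ⟨r, hrM, hβr, hr1, hrc⟩ : ∃ r, max M 1 ≤ r ∧
        (β < Real.log (T0 f r) / Real.log (Real.log r)) ∧ 1 < Real.log r ∧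
        c + K ^ (α - 1) * Real.log r ^ α ≤ Real.log r ^ β := by
      have := (hfreq.and_eventually (hEv K hK)).and_eventually (eventually_ge_atTop (max M 1))
      obtain ⟨r, ⟨⟨h1', h2', h3'⟩, h4'⟩⟩ := this.exists
      exact ⟨r, h4', h1', h2', h3'⟩
    have hr1' : (1:ℝ) ≤ r := (le_max_right M 1).trans hrM
    have hr0 : (0:ℝ) < r := by linarith
    have hlr : (0:ℝ) < Real.log r := by linarith
    have hll : (0:ℝ) < Real.log (Real.log r) := Real.log_pos hr1
    -- T(r) > (log r)^β
    have hlog : β * Real.log (Real.log r) < Real.log (T0 f r) := (lt_div_iff₀ hll).1 hβr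
    have hT0pos : 0 < T0 f r := by
      rcases (hT_nonneg r hr0.le).lt_or_eq with h'' | h''
      · exact h''
      · exfalso
        rw [← h'', Real.log_zero] at hlog
        nlinarith
    have hTr : Real.log r ^ β < T0 f r := by
      have hpow_pos : 0 < Real.log r ^ β := Real.rpow_pos_of_pos hlr β
      have h1'' : Real.log (Real.log r ^ β) < Real.log (T0 f r) := by
        rw [Real.log_rpow hlr]; exact hlog
      exact (Real.log_lt_log_iff hpow_pos hT0pos).1 h1''
    -- A(r) ≥ K^{α-1} (log r)^{α-1}
    have hA_lb : K ^ (α - 1) * Real.log r ^ (α - 1) ≤ sphArea f r := by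
      have h1'' : K ^ (α - 1) * Real.log r ^ α ≤ sphArea f r * Real.log r := by
        have := hkey r hr1'
        nlinarith [hrc, hTr]
      have h2'' : Real.log r ^ (α - 1) * Real.log r = Real.log r ^ α := by
        rw [← Real.rpow_add_one (ne_of_gt hlr) (α - 1), sub_add_cancel]
      rw [← h2'', ← mul_assoc] at h1''
      exact le_of_mul_le_mul_right h1'' hlr
    -- the interval [r, r^K] is inside E
    set R := r ^ K with hRdef
    have hlogR : Real.log R = K * Real.log r := Real.log_rpow hr0 K
    have hrR : r ≤ R := by
      calc r = r ^ (1:ℝ) := (Real.rpow_one r).symm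
        _ ≤ r ^ K := Real.rpow_le_rpow_of_exponent_le hr1' hK.le
    have hr_gt1 : (1:ℝ) < r := by
      by_contra hcon'
      push_neg at hcon'
      have := Real.log_nonpos hr0.le hcon'
      linarith
    have hR1 : (1:ℝ) < R := lt_of_lt_of_le hr_gt1 hrR
    have hRlogpos : 0 < Real.log R := Real.log_pos hR1
    have hsubE : Set.Icc r R ⊆ E ∩ Set.Icc 1 R := by
      intro t ht
      have ht1 : (1:ℝ) ≤ t := hr1'.trans ht.1
      have ht0 : (0:ℝ) < t := by linarith
      refine ⟨⟨ht1, ?_⟩, ht1, ht.2⟩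
      have e1 : Real.log t ^ (α - 1) ≤ Real.log R ^ (α - 1) :=
        Real.rpow_le_rpow (Real.log_nonneg ht1) (Real.log_le_log ht0 ht.2) (by linarith)
      have e2 : Real.log R ^ (α - 1) = K ^ (α - 1) * Real.log r ^ (α - 1) := by
        rw [hlogR, Real.mul_rpow (by linarith) hlr.le]
      calc Real.log t ^ (α - 1) ≤ Real.log R ^ (α - 1) := e1
        _ = K ^ (α - 1) * Real.log r ^ (α - 1) := e2
        _ ≤ sphArea f r := hA_lb
        _ ≤ sphArea f t := hA_mono ht.1
    -- lower bound on the integral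
    have hint : IntegrableOn (fun t : ℝ => 1 / t) (Set.Icc 1 R) volume := by
      refine ContinuousOn.integrableOn_Icc ?_
      refine ContinuousOn.div continuousOn_const continuousOn_id ?_
      intro t ht
      exact ne_of_gt (lt_of_lt_of_le zero_lt_one ht.1)
    have hintE : IntegrableOn (fun t : ℝ => 1 / t) (E ∩ Set.Icc 1 R) volume :=
      hint.mono_set Set.inter_subset_right
    have hsign : 0 ≤ᵐ[volume.restrict (E ∩ Set.Icc (1:ℝ) R)] fun t : ℝ => 1 / t := by
      refine ae_restrict_of_ae_restrict_of_subset Set.inter_subset_right ?_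
      refine (ae_restrict_iff' measurableSet_Icc).2 (Filter.Eventually.of_forall ?_)
      intro t ht
      exact div_nonneg zero_le_one (by linarith [ht.1])
    have hlow : (∫ t in Set.Icc r R, (1:ℝ) / t) ≤ ∫ t in E ∩ Set.Icc 1 R, (1:ℝ) / t :=
      setIntegral_mono_set hintE hsign hsubE.eventuallyLE
    have hIccval : ∫ t in Set.Icc r R, (1:ℝ) / t = Real.log R - Real.log r := by
      rw [integral_Icc_eq_integral_Ioc, ← intervalIntegral.integral_of_le hrR,
        integral_one_div, Real.log_div (by linarith) (ne_of_gt hr0)]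
      rw [Set.uIcc_of_le hrR]
      rintro ⟨h1'', -⟩
      linarith
    refine ⟨R, le_trans (le_trans (le_max_left M 1) hrM) hrR, ?_⟩
    rw [le_div_iff₀ hRlogpos]
    have : (1 - 1 / K) * Real.log R = Real.log R - Real.log r := by
      rw [hlogR]
      field_simp
    rw [this, ← hIccval]
    exact hlow
  -- Step 8: conclude.
  have hbdd : IsBoundedUnder (· ≤ ·) atTop
      (fun R : ℝ => (∫ t in E ∩ Set.Icc 1 R, 1 / t) / Real.log R) :=
    ⟨1, Filter.eventually_map.2 (Filter.Eventually.of_forall hφ1)⟩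
  have hcobdd : IsCoboundedUnder (· ≤ ·) atTop
      (fun R : ℝ => (∫ t in E ∩ Set.Icc 1 R, 1 / t) / Real.log R) := by
    refine IsBoundedUnder.isCoboundedUnder_le ?_
    exact ⟨0, Filter.eventually_map.2 (Filter.Eventually.of_forall hφ0)⟩
  have hup : upLogDens E ≤ 1 := by
    rw [upLogDens]
    exact Filter.limsup_le_of_le hcobdd (Filter.Eventually.of_forall hφ1)
  have hge : ∀ K : ℝ, 1 < K → 1 - 1 / K ≤ upLogDens E := by
    intro K hK
    rw [upLogDens]
    exact Filter.le_limsup_of_frequently_le (hmain K hK) hbdd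
  have hlo : (1:ℝ) ≤ upLogDens E := by
    refine le_of_forall_pos_le_add ?_
    intro ε hε
    set K := max 2 (1/ε) with hKdef
    have hK1 : (1:ℝ) < K := lt_of_lt_of_le one_lt_two (le_max_left _ _)
    have hK0 : (0:ℝ) < K := by linarith
    have hKε : 1 / K ≤ ε := by
      rw [div_le_iff₀ hK0]
      calc (1:ℝ) = ε * (1/ε) := by field_simp
        _ ≤ ε * K := by
            exact mul_le_mul_of_nonneg_left (le_max_right _ _) hε.le
    have := hge K hK1
    linarith
  exact le_antisymm hup hlo
end

section
/- Let φ, ψ : [r₀,∞) → [e,∞) be functions with ψ(r) → ∞ as r → ∞, and let ε > 0. If limsup_{r→∞} φ(r) · log^{1+ε} ψ(r) / ψ(r) < ∞, then φ(r) · log^m φ(r) = o(ψ(r)) as r → ∞, where m = 1 + ε/2. -/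
open MeasureTheory Filter Metric

/-- Remark 2.2, real-analysis step: if `φ, ψ ≥ e` on `[r₀,∞)`, `ψ → ∞`, and
`limsup φ(r)·log^{1+ε}ψ(r)/ψ(r) < ∞`, then `φ(r)·logᵐφ(r) = o(ψ(r))` with `m = 1 + ε/2`. -/
theorem little_o_from_limsup_bound
    (r₀ : ℝ) (φ ψ : ℝ → ℝ)
    (hφ : ∀ r, r₀ ≤ r → Real.exp 1 ≤ φ r)
    (hψ : ∀ r, r₀ ≤ r → Real.exp 1 ≤ ψ r)
    (hψ' : Filter.Tendsto ψ Filter.atTop Filter.atTop)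
    (ε : ℝ) (hε : 0 < ε)
    (h : ∃ C : ℝ, ∀ᶠ r in Filter.atTop, φ r * Real.log (ψ r) ^ (1 + ε) / ψ r ≤ C) :
    (fun r => φ r * Real.log (φ r) ^ (1 + ε / 2)) =o[Filter.atTop] ψ := by
  obtain ⟨C, hC⟩ := h
  rw [Asymptotics.isLittleO_iff]
  intro c hc
  set C₀ : ℝ := max C 1 with hC₀def
  have hC₀1 : (1:ℝ) ≤ C₀ := le_max_right _ _
  have hC₀0 : (0:ℝ) < C₀ := one_pos.trans_le hC₀1
  set K : ℝ := 2 ^ (1 + ε/2) * C₀ / c with hKdef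
  have h2pos : (0:ℝ) < 2 ^ (1 + ε/2) := Real.rpow_pos_of_pos two_pos _
  have hK0 : 0 < K := div_pos (mul_pos h2pos hC₀0) hc
  have hlog : Filter.Tendsto (fun r => Real.log (ψ r)) Filter.atTop Filter.atTop :=
    Real.tendsto_log_atTop.comp hψ'
  filter_upwards [Filter.eventually_ge_atTop r₀,
    hlog.eventually_ge_atTop (Real.log C₀),
    hlog.eventually_ge_atTop (K ^ (2/ε)), hC] with r hr hlogC hlogK hCr
  have hψe : Real.exp 1 ≤ ψ r := hψ r hr
  have hφe : Real.exp 1 ≤ φ r := hφ r hr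
  have hψ0 : 0 < ψ r := (Real.exp_pos 1).trans_le hψe
  have hφ0 : 0 < φ r := (Real.exp_pos 1).trans_le hφe
  have hlψ1 : 1 ≤ Real.log (ψ r) := by
    have := Real.log_le_log (Real.exp_pos 1) hψe
    simpa [Real.log_exp] using this
  have hlφ1 : 1 ≤ Real.log (φ r) := by
    have := Real.log_le_log (Real.exp_pos 1) hφe
    simpa [Real.log_exp] using this
  set L := Real.log (ψ r) with hL
  have hL0 : 0 < L := lt_of_lt_of_le one_pos hlψ1
  have hmain : φ r * L ^ (1 + ε) ≤ C₀ * ψ r := by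
    have h1 : φ r * L ^ (1 + ε) ≤ C * ψ r := by
      have := (div_le_iff₀ hψ0).mp hCr
      linarith
    have h2 : C * ψ r ≤ C₀ * ψ r := mul_le_mul_of_nonneg_right (le_max_left _ _) hψ0.le
    linarith
  have hL1e : (1:ℝ) ≤ L ^ (1 + ε) := Real.one_le_rpow hlψ1 (by linarith)
  have hφle : φ r ≤ C₀ * ψ r := by nlinarith
  have hlφ2 : Real.log (φ r) ≤ 2 * L := by
    have := Real.log_le_log hφ0 hφle
    rw [Real.log_mul hC₀0.ne' hψ0.ne'] at this
    linarith
  have hlφ0 : (0:ℝ) ≤ Real.log (φ r) := by linarith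
  have hm : (0:ℝ) ≤ 1 + ε/2 := by linarith
  have hstep : Real.log (φ r) ^ (1 + ε/2) ≤ 2 ^ (1 + ε/2) * L ^ (1 + ε/2) := by
    calc Real.log (φ r) ^ (1 + ε/2) ≤ (2*L) ^ (1 + ε/2) :=
          Real.rpow_le_rpow hlφ0 hlφ2 hm
      _ = 2 ^ (1 + ε/2) * L ^ (1 + ε/2) := Real.mul_rpow (by norm_num) hL0.le
  have hKle : K ≤ L ^ (ε/2) := by
    have h' : (K ^ (2/ε)) ^ (ε/2) ≤ L ^ (ε/2) :=
      Real.rpow_le_rpow (Real.rpow_nonneg hK0.le _) hlogK (by positivity)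
    rwa [← Real.rpow_mul hK0.le, div_mul_div_comm,
      show (2:ℝ)*ε/(ε*2) = 1 by field_simp,
      Real.rpow_one] at h'
  set X := φ r * L ^ (1 + ε/2) with hXdef
  have hX0 : 0 ≤ X := mul_nonneg hφ0.le (Real.rpow_nonneg hL0.le _)
  have hXL : X * L ^ (ε/2) ≤ C₀ * ψ r := by
    have : X * L ^ (ε/2) = φ r * L ^ (1 + ε) := by
      rw [hXdef, mul_assoc, ← Real.rpow_add hL0]
      ring_nf
    rw [this]; exact hmain
  have hcK : c * K = 2 ^ (1 + ε/2) * C₀ := by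
    rw [hKdef]; field_simp
  have key : 2 ^ (1 + ε/2) * X * K ≤ c * ψ r * K := by
    calc 2 ^ (1 + ε/2) * X * K ≤ 2 ^ (1 + ε/2) * X * L ^ (ε/2) :=
          mul_le_mul_of_nonneg_left hKle (mul_nonneg h2pos.le hX0)
      _ = 2 ^ (1 + ε/2) * (X * L ^ (ε/2)) := by ring
      _ ≤ 2 ^ (1 + ε/2) * (C₀ * ψ r) := mul_le_mul_of_nonneg_left hXL h2pos.le
      _ = c * ψ r * K := by rw [hKdef]; field_simp
  have hfin : 2 ^ (1 + ε/2) * X ≤ c * ψ r := le_of_mul_le_mul_right key hK0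
  have hφX : φ r * Real.log (φ r) ^ (1 + ε/2) ≤ c * ψ r := by
    have : φ r * Real.log (φ r) ^ (1 + ε/2) ≤ 2 ^ (1 + ε/2) * X := by
      calc φ r * Real.log (φ r) ^ (1 + ε/2)
          ≤ φ r * (2 ^ (1 + ε/2) * L ^ (1 + ε/2)) :=
            mul_le_mul_of_nonneg_left hstep hφ0.le
        _ = 2 ^ (1 + ε/2) * X := by rw [hXdef]; ring
    linarith
  rw [Real.norm_of_nonneg (mul_nonneg hφ0.le (Real.rpow_nonneg hlφ0 _)),
    Real.norm_of_nonneg hψ0.le]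
  exact hφX
end
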